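/- Let V be an n-dimensional vector space over a field K. Let A and B be extensors in the exterior algebra Λ(V), with corresponding subspaces Ā and B̄, and let p = dim(Ā) - dim(Ā ∩ B̄). If h > p, then the raising geometric product ⋄₂₁^(h)(A ⊗ B) = Σ_{(A)} A₍₁₎ ⊗ A₍₂₎B (summing over coproduct slices of A of degrees (a-h, h)) equals zero. -/

import Mathlib

open TensorProduct

/-- The ordered wedge product of the vectors `u t`, `t ∈ S` (in increasing order of index). -/
noncomputable def wedgeOn (K : Type*) {V : Type*} [CommRing K] [AddCommGroup V] [Module K V]
    {a : ℕ} (u : Fin a → V) (S : Finset (Fin a)) : ExteriorAlgebra K V :=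
  ((S.sort (· ≤ ·)).map fun t => ExteriorAlgebra.ι K (u t)).prod

/-- The shuffle sign of the coproduct slice `(Sᶜ, S)` of a word of length `a`. -/
def shuffleSign {a : ℕ} (S : Finset (Fin a)) : ℤ :=
  (-1) ^ (∑ i ∈ S, (Sᶜ.filter fun j => i < j).card)

/-- The raising geometric product `⋄₂₁^(h)(A ⊗ B) = Σ_{(A)₍ₐ₋ₕ,ₕ₎} A₍₁₎ ⊗ A₍₂₎B` for an
extensor `A = u 0 ∧ ⋯ ∧ u (a-1)` and `B ∈ Λ(V)`. -/
noncomputable def geom21 (K : Type*) {V : Type*} [CommRing K] [AddCommGroup V] [Module K V]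
    (h : ℕ) {a : ℕ} (u : Fin a → V) (B : ExteriorAlgebra K V) :
    ExteriorAlgebra K V ⊗[K] ExteriorAlgebra K V :=
  ∑ S ∈ Finset.powersetCard h Finset.univ,
    shuffleSign S • (wedgeOn K u Sᶜ ⊗ₜ[K] (wedgeOn K u S * B))

/-- The wedge product (as a list product of `ι`'s) of a linearly dependent list is zero. -/
lemma prod_map_ι_eq_zero {K V : Type*} [Field K] [AddCommGroup V] [Module K V]
    (L : List V) (hL : ¬ LinearIndependent K L.get) :
    (L.map (ExteriorAlgebra.ι K)).prod = 0 := by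
  have hE : (L.map (ExteriorAlgebra.ι K)).prod = ExteriorAlgebra.ιMulti K L.length L.get := by
    rw [ExteriorAlgebra.ιMulti_apply]
    conv_lhs => rw [← List.ofFn_get L]
    rw [List.map_ofFn]
    rfl
  rw [hE]
  exact AlternatingMap.map_linearDependent _ _ hL

/-- if `h > p = dim Ā - dim (Ā ⊓ B̄)` then `⋄₂₁^(h)(A ⊗ B) = 0`. -/
theorem stmt0 {K V : Type*} [Field K] [AddCommGroup V] [Module K V] [FiniteDimensional K V]
    {a b : ℕ} (u : Fin a → V) (w : Fin b → V)
    (hu : LinearIndependent K u) (hw : LinearIndependent K w)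
    (p : ℕ)
    (hp : p = Module.finrank K (Submodule.span K (Set.range u)) -
      Module.finrank K ((Submodule.span K (Set.range u)) ⊓ (Submodule.span K (Set.range w)) : Submodule K V))
    (h : ℕ) (hh : p < h) :
    geom21 K h u (ExteriorAlgebra.ιMulti K b w) = 0 := by
  set A : Submodule K V := Submodule.span K (Set.range u) with hA
  set B : Submodule K V := Submodule.span K (Set.range w) with hB
  unfold geom21
  apply Finset.sum_eq_zero
  intro S hS
  have hcard : S.card = h := (Finset.mem_powersetCard.mp hS).2
  suffices hz : wedgeOn K u S * ExteriorAlgebra.ιMulti K b w = 0 by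
    rw [hz, tmul_zero, smul_zero]
  set L : List V := ((S.sort (· ≤ ·)).map u) ++ List.ofFn w with hLdef
  have hLprod : wedgeOn K u S * ExteriorAlgebra.ιMulti K b w = (L.map (ExteriorAlgebra.ι K)).prod := by
    rw [hLdef, List.map_append, List.prod_append]
    congr 1
    · unfold wedgeOn
      rw [List.map_map]
      rfl
    · rw [ExteriorAlgebra.ιMulti_apply, List.map_ofFn]
      rfl
  rw [hLprod]
  apply prod_map_ι_eq_zero
  intro hind
  have hlen : L.length = h + b := by
    simp [hLdef, Finset.length_sort, hcard]
  -- the span of the list is inside A ⊔ B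
  have hsub : Submodule.span K (Set.range L.get) ≤ A ⊔ B := by
    rw [Submodule.span_le]
    rintro x ⟨i, rfl⟩
    have hmem : L.get i ∈ L := List.get_mem L i
    rcases List.mem_append.mp hmem with hx | hx
    · obtain ⟨j, _, hj⟩ := List.mem_map.mp hx
      rw [← hj]
      exact Submodule.mem_sup_left (Submodule.subset_span ⟨j, rfl⟩)
    · obtain ⟨j, hj⟩ := List.mem_ofFn.mp hx
      rw [← hj]
      exact Submodule.mem_sup_right (Submodule.subset_span ⟨j, rfl⟩)
  have h1 : Module.finrank K (Submodule.span K (Set.range L.get)) = h + b := by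
    rw [finrank_span_eq_card hind, Fintype.card_fin, hlen]
  have h2 : Module.finrank K (A ⊔ B : Submodule K V) + Module.finrank K (A ⊓ B : Submodule K V)
      = Module.finrank K A + Module.finrank K B :=
    Submodule.finrank_sup_add_finrank_inf_eq A B
  have hrA : Module.finrank K A = a := by
    rw [hA, finrank_span_eq_card hu, Fintype.card_fin]
  have hrB : Module.finrank K B = b := by
    rw [hB, finrank_span_eq_card hw, Fintype.card_fin]
  have hle : h + b ≤ Module.finrank K (A ⊔ B : Submodule K V) := by
    rw [← h1]
    exact Submodule.finrank_mono hsub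
  have hdle : Module.finrank K (A ⊓ B : Submodule K V) ≤ a := by
    rw [← hrA]
    exact Submodule.finrank_mono inf_le_left
  omega
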